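/- arXiv:2603.09409 — 3 statements merged into one kernel-verified Lean document; each statement's English description precedes it below -/
import Mathlib

section
/- Fix x ∈ (0,1), m ≥ 1, and let W be the m×m matrix with entries W[i][j] = x^{2j(m−i)} for 1 ≤ i ≤ m, 0 ≤ j ≤ m−1. For k ∈ {1,...,m}, let w_{k,1} be the determinant of the matrix obtained from W by deleting the k-th row and the first column. Then w_{k,1} · ∏_{i=1}^{k−1}(1 − x^{2(k−i)}) · ∏_{j=k+1}^{m}(1 − x^{2(j−k)}) = x^{k²−k} · det W. -/
open Finset


lemma ioi_succAbove {n : ℕ} (k : Fin (n+1)) (i : Fin n) :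
    (Ioi (k.succAbove i) : Finset (Fin (n+1))) =
      if k.succAbove i < k then insert k ((Ioi i).map (Fin.succAboveEmb k))
      else (Ioi i).map (Fin.succAboveEmb k) := by
  split_ifs with h
  · ext j
    simp only [mem_Ioi, mem_insert, mem_map, Fin.succAboveEmb, Function.Embedding.coeFn_mk]
    constructor
    · intro hj
      by_cases hjk : j = k
      · exact Or.inl hjk
      · obtain ⟨j', rfl⟩ := Fin.exists_succAbove_eq hjk
        exact Or.inr ⟨j', Fin.succAbove_lt_succAbove_iff.mp hj, rfl⟩
    · rintro (rfl | ⟨j', hj', rfl⟩)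
      · exact h
      · exact Fin.succAbove_lt_succAbove_iff.mpr hj'
  · push_neg at h
    have hk : k < k.succAbove i := lt_of_le_of_ne h (Fin.ne_succAbove k i)
    ext j
    simp only [mem_Ioi, mem_map, Fin.succAboveEmb, Function.Embedding.coeFn_mk]
    constructor
    · intro hj
      have hjk : j ≠ k := (hk.trans hj).ne'
      obtain ⟨j', rfl⟩ := Fin.exists_succAbove_eq hjk
      exact ⟨j', Fin.succAbove_lt_succAbove_iff.mp hj, rfl⟩
    · rintro ⟨j', hj', rfl⟩
      exact Fin.succAbove_lt_succAbove_iff.mpr hj'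

lemma pairs_split {n : ℕ} (k : Fin (n+1)) (g : Fin (n+1) → Fin (n+1) → ℝ) :
    (∏ i, ∏ j ∈ Ioi i, g i j) =
      (∏ i : Fin n, ∏ j ∈ Ioi i, g (k.succAbove i) (k.succAbove j)) *
        ((∏ i ∈ Iio k, g i k) * ∏ j ∈ Ioi k, g k j) := by
  rw [Fin.prod_univ_succAbove (fun i => ∏ j ∈ Ioi i, g i j) k]
  have h1 : ∀ i : Fin n, (∏ j ∈ Ioi (k.succAbove i), g (k.succAbove i) j) =
      (if k.succAbove i < k then g (k.succAbove i) k else 1) *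
        ∏ j ∈ Ioi i, g (k.succAbove i) (k.succAbove j) := by
    intro i
    rw [ioi_succAbove]
    split_ifs with h
    · rw [prod_insert (by simp [Fin.succAboveEmb, Fin.succAbove_ne])]
      rw [prod_map]
      rfl
    · rw [one_mul, prod_map]
      rfl
  simp only [h1, prod_mul_distrib]
  have h2 : (∏ i : Fin n, if k.succAbove i < k then g (k.succAbove i) k else 1) =
      ∏ i ∈ Iio k, g i k := by
    rw [← Finset.prod_filter]
    refine Finset.prod_nbij (fun i => k.succAbove i) ?_ ?_ ?_ ?_
    · intro a ha
      simp only [mem_filter, mem_univ, true_and] at ha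
      simpa using ha
    · exact fun a _ b _ h => Fin.succAbove_right_injective h
    · intro j hj
      simp only [coe_filter, mem_univ, true_and, Set.mem_setOf_eq, mem_coe, mem_Iio] at hj ⊢
      obtain ⟨z, rfl⟩ := Fin.exists_succAbove_eq hj.ne
      exact ⟨z, hj, rfl⟩
    · exact fun a _ => rfl
  rw [h2]; ring


section helpers
-- product over Icc 1 n as range
lemma icc_one_prod (n : ℕ) (f : ℕ → ℝ) :
    ∏ l ∈ Icc 1 n, f l = ∏ i ∈ range n, f (i + 1) := by
  rw [← Finset.Ico_add_one_right_eq_Icc, prod_Ico_eq_prod_range]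
  simp [add_comm]

lemma prod_fin_Iio {n : ℕ} (k : Fin n) (F : ℕ → ℝ) :
    ∏ i ∈ Iio k, F (i : ℕ) = ∏ i ∈ range (k : ℕ), F i := by
  refine Finset.prod_nbij (fun i => (i : ℕ)) ?_ ?_ ?_ ?_
  · intro a ha
    rw [mem_Iio] at ha
    rw [mem_range]
    exact ha
  · exact fun a _ b _ h => Fin.val_injective h
  · intro j hj
    simp only [coe_range, Set.mem_Iio, mem_coe, mem_Iio] at hj ⊢
    exact ⟨⟨j, hj.trans k.isLt⟩, mem_coe.mpr (mem_Iio.mpr hj), rfl⟩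
  · exact fun a _ => rfl

lemma prod_fin_Ioi {n : ℕ} (k : Fin n) (F : ℕ → ℝ) :
    ∏ j ∈ Ioi k, F (j : ℕ) = ∏ j ∈ Ico ((k : ℕ) + 1) n, F j := by
  refine Finset.prod_nbij (fun i => (i : ℕ)) ?_ ?_ ?_ ?_
  · intro a ha
    rw [mem_Ioi] at ha
    rw [mem_Ico]
    exact ⟨Nat.succ_le_iff.mpr ha, a.isLt⟩
  · exact fun a _ b _ h => Fin.val_injective h
  · intro j hj
    simp only [coe_Ico, Set.mem_Ico, mem_coe, mem_Ioi] at hj ⊢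
    exact ⟨⟨j, hj.2⟩, mem_coe.mpr (mem_Ioi.mpr hj.1), rfl⟩
  · exact fun a _ => rfl

lemma hA_lemma (m K : ℕ) (x : ℝ) (hK : K ≤ m) :
    ∏ i ∈ range K, (x ^ (2 * (m - K)) - x ^ (2 * (m - i))) =
      x ^ (2 * (m - K) * K) * ∏ l ∈ Icc 1 K, (1 - x ^ (2 * l)) := by
  have h1 : ∀ i ∈ range K, x ^ (2 * (m - K)) - x ^ (2 * (m - i)) =
      x ^ (2 * (m - K)) * (1 - x ^ (2 * (K - i))) := by
    intro i hi
    rw [mem_range] at hi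
    rw [mul_sub, mul_one, ← pow_add]
    congr 2
    omega
  rw [prod_congr rfl h1, prod_mul_distrib, prod_const, card_range, ← pow_mul, icc_one_prod]
  congr 1
  rw [← prod_range_reflect]
  refine prod_congr rfl fun i hi => ?_
  rw [mem_range] at hi
  congr 2
  omega

lemma hB_lemma (m K : ℕ) (x : ℝ) (hK : K ≤ m) :
    ∏ t ∈ range (m - K), (x ^ (2 * (m - (K + 1 + t))) - x ^ (2 * (m - K))) =
      x ^ ((m - K) * (m - K - 1)) * ∏ l ∈ Icc 1 (m - K), (1 - x ^ (2 * l)) := by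
  have h1 : ∀ t ∈ range (m - K), x ^ (2 * (m - (K + 1 + t))) - x ^ (2 * (m - K)) =
      x ^ (2 * (m - K - 1 - t)) * (1 - x ^ (2 * (t + 1))) := by
    intro t ht
    rw [mem_range] at ht
    rw [mul_sub, mul_one, ← pow_add]
    congr 2
    · omega
    · omega
  rw [prod_congr rfl h1, prod_mul_distrib, prod_pow_eq_pow_sum, icc_one_prod]
  congr 2
  have h2 : ∑ t ∈ range (m - K), 2 * (m - K - 1 - t) = ∑ t ∈ range (m - K), 2 * t := by
    rw [← sum_range_reflect]
    refine sum_congr rfl fun t ht => ?_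
    rw [mem_range] at ht
    congr 1
    omega
  rw [h2, ← mul_sum]
  have := sum_range_id_mul_two (m - K)
  omega

end helpers

lemma key_nat (m K : ℕ) (h : K ≤ m) :
    m * (m + 1) = ((K ^ 2 + K) + 2 * (m - K) * K + (m - K) * (m - K - 1)) + 2 * (m - K) := by
  obtain ⟨d, rfl⟩ := Nat.exists_eq_add_of_le h
  simp only [Nat.add_sub_cancel_left]
  rcases d with _ | e
  · ring
  · simp only [Nat.add_sub_cancel]
    ring



/-- Size of the matrix is `m + 1`, i.e. the paper's `m` is `m + 1 ≥ 1` here.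
The paper's 1-based row index `k` corresponds to `(k : ℕ) + 1` for `k : Fin (m+1)`,
so `k² - k` (paper) becomes `(k : ℕ)^2 + (k : ℕ)`. -/
theorem vandermonde_geometric_minor (m : ℕ) (x : ℝ) (hx : x ∈ Set.Ioo (0 : ℝ) 1)
    (k : Fin (m + 1)) :
    Matrix.det
        ((Matrix.of fun (i j : Fin (m + 1)) => x ^ (2 * (j : ℕ) * (m - (i : ℕ)))).submatrix
          k.succAbove Fin.succ) *
        ((∏ l ∈ Finset.Icc 1 (k : ℕ), (1 - x ^ (2 * l))) *
          ∏ l ∈ Finset.Icc 1 (m - (k : ℕ)), (1 - x ^ (2 * l))) =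
      x ^ ((k : ℕ) ^ 2 + (k : ℕ)) *
        Matrix.det (Matrix.of fun (i j : Fin (m + 1)) => x ^ (2 * (j : ℕ) * (m - (i : ℕ)))) := by
  have hKm : (k : ℕ) ≤ m := Nat.lt_succ_iff.mp k.isLt
  set v : Fin (m + 1) → ℝ := fun i => x ^ (2 * (m - (i : ℕ))) with hv
  have hW : (Matrix.of fun (i j : Fin (m + 1)) => x ^ (2 * (j : ℕ) * (m - (i : ℕ)))) =
      Matrix.vandermonde v := by
    ext i j
    simp only [Matrix.of_apply, Matrix.vandermonde_apply, hv]
    rw [← pow_mul]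
    congr 1
    ring
  have hM : (Matrix.of fun (i j : Fin (m + 1)) =>
        x ^ (2 * (j : ℕ) * (m - (i : ℕ)))).submatrix k.succAbove Fin.succ =
      Matrix.of fun (i j : Fin m) =>
        v (k.succAbove i) * Matrix.vandermonde (v ∘ k.succAbove) i j := by
    ext i j
    simp only [Matrix.submatrix_apply, Matrix.of_apply, Matrix.vandermonde_apply,
      Function.comp_apply, hv]
    rw [← pow_mul, ← pow_add]
    congr 1
    rw [Fin.val_succ]
    ring
  rw [hM, Matrix.det_mul_column, hW, Matrix.det_vandermonde, Matrix.det_vandermonde,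
    pairs_split k (fun i j => v j - v i)]
  have hA : (∏ i ∈ Iio k, (v k - v i)) =
      x ^ (2 * (m - (k : ℕ)) * (k : ℕ)) * ∏ l ∈ Icc 1 (k : ℕ), (1 - x ^ (2 * l)) := by
    have := prod_fin_Iio k (fun i => x ^ (2 * (m - (k : ℕ))) - x ^ (2 * (m - i)))
    simp only [hv] at this ⊢
    rw [this, hA_lemma m (k : ℕ) x hKm]
  have hB : (∏ j ∈ Ioi k, (v j - v k)) =
      x ^ ((m - (k : ℕ)) * (m - (k : ℕ) - 1)) *
        ∏ l ∈ Icc 1 (m - (k : ℕ)), (1 - x ^ (2 * l)) := by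
    have h := prod_fin_Ioi k (fun j => x ^ (2 * (m - j)) - x ^ (2 * (m - (k : ℕ))))
    simp only [hv] at h ⊢
    rw [h, prod_Ico_eq_prod_range]
    have : m + 1 - ((k : ℕ) + 1) = m - (k : ℕ) := by omega
    rw [this]
    exact hB_lemma m (k : ℕ) x hKm
  have hV : (∏ i : Fin m, v (k.succAbove i)) * x ^ (2 * (m - (k : ℕ))) = x ^ (m * (m + 1)) := by
    have h0 : (∏ i : Fin m, v (k.succAbove i)) * x ^ (2 * (m - (k : ℕ))) =
        ∏ i : Fin (m + 1), v i := by
      rw [Fin.prod_univ_succAbove v k, mul_comm]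
    rw [h0, Fin.prod_univ_eq_prod_range (fun i => x ^ (2 * (m - i))) (m + 1),
      prod_pow_eq_pow_sum]
    congr 1
    have h1 : ∑ i ∈ range (m + 1), 2 * (m - i) = ∑ i ∈ range (m + 1), 2 * i := by
      rw [← sum_range_reflect]
      refine sum_congr rfl fun i hi => ?_
      rw [mem_range] at hi
      congr 1
      omega
    rw [h1, ← mul_sum, mul_comm 2 _, sum_range_id_mul_two, Nat.add_sub_cancel,
      Nat.mul_comm]
  simp only [Function.comp_apply]
  rw [hA, hB]
  have hxne : x ^ (2 * (m - (k : ℕ))) ≠ 0 := pow_ne_zero _ (ne_of_gt hx.1)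
  have hVval : (∏ i : Fin m, v (k.succAbove i)) =
      x ^ (((k : ℕ) ^ 2 + (k : ℕ)) + 2 * (m - (k : ℕ)) * (k : ℕ) +
        (m - (k : ℕ)) * (m - (k : ℕ) - 1)) := by
    refine mul_right_cancel₀ hxne ?_
    rw [hV, ← pow_add, ← key_nat m (k : ℕ) hKm]
  rw [hVval, pow_add, pow_add]
  ring
end

section
/- Let z ∈ ℝⁿ with z ≠ 0, λ₁,...,λ_{m−1} ∈ ℝ, and define h(x) = (z·x) ∏_{k=1}^{m−1} [ (λ_k² − |z|²)|x−z|² − 4|z|²(z·x) ]. Then for every x ≠ z, the Kelvin-type transform satisfies |x−z|^{2m−n} · h( 2|z|² (x−z)/|x−z|² + z ) = 4^{m−1} |z|^{4m−2} · (|x|² − |z|²)/|x−z|ⁿ · ∏_{k=1}^{m−1} (λ_k² − |x|²). -/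
open Finset
open scoped RealInnerProductSpace

/-- Kelvin-type transform identity: here `‖x - z‖ ^ (2m - n)` is interpreted via the real
power `rpow` since `2m - n` may be negative. -/
theorem kelvin_transform_identity (n : ℕ) (hn : 1 ≤ n) (m : ℕ) (hm : 2 ≤ m)
    (z : EuclideanSpace ℝ (Fin n)) (hz : z ≠ 0) (lam : ℕ → ℝ)
    (h : EuclideanSpace ℝ (Fin n) → ℝ)
    (hh : ∀ x, h x = ⟪z, x⟫ *
      ∏ k ∈ Finset.Icc 1 (m - 1),
        ((lam k ^ 2 - ‖z‖ ^ 2) * ‖x - z‖ ^ 2 - 4 * ‖z‖ ^ 2 * ⟪z, x⟫))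
    (x : EuclideanSpace ℝ (Fin n)) (hx : x ≠ z) :
    ‖x - z‖ ^ (2 * (m : ℝ) - (n : ℝ)) *
        h ((2 * ‖z‖ ^ 2 / ‖x - z‖ ^ 2) • (x - z) + z) =
      4 ^ (m - 1) * ‖z‖ ^ (4 * m - 2) * ((‖x‖ ^ 2 - ‖z‖ ^ 2) / ‖x - z‖ ^ n) *
        ∏ k ∈ Finset.Icc 1 (m - 1), (lam k ^ 2 - ‖x‖ ^ 2) := by
  have hR : (0:ℝ) < ‖x - z‖ := by
    rw [norm_pos_iff]; exact sub_ne_zero_of_ne hx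
  have hR2 : (‖x - z‖:ℝ) ^ 2 ≠ 0 := pow_ne_zero 2 hR.ne'
  set y := (2 * ‖z‖ ^ 2 / ‖x - z‖ ^ 2) • (x - z) + z with hy
  have hxz : ‖x - z‖ ^ 2 = ‖x‖ ^ 2 - 2 * ⟪z, x⟫ + ‖z‖ ^ 2 := by
    rw [@norm_sub_sq_real, real_inner_comm]
  have hzy : ⟪z, y⟫ = ‖z‖ ^ 2 * (‖x‖ ^ 2 - ‖z‖ ^ 2) / ‖x - z‖ ^ 2 := by
    rw [hy, inner_add_right, real_inner_smul_right, inner_sub_right,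
      real_inner_self_eq_norm_sq]
    generalize hA : (inner ℝ z x : ℝ) = a at hxz ⊢
    field_simp
    linear_combination hxz
  have hyz : ‖y - z‖ ^ 2 = 4 * ‖z‖ ^ 4 / ‖x - z‖ ^ 2 := by
    have hys : y - z = (2 * ‖z‖ ^ 2 / ‖x - z‖ ^ 2) • (x - z) := by
      rw [hy]; abel
    rw [hys, norm_smul, Real.norm_eq_abs, mul_pow, sq_abs]
    field_simp
    ring
  have hfac : ∀ k : ℕ,
      (lam k ^ 2 - ‖z‖ ^ 2) * ‖y - z‖ ^ 2 - 4 * ‖z‖ ^ 2 * ⟪z, y⟫ =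
      4 * ‖z‖ ^ 4 / ‖x - z‖ ^ 2 * (lam k ^ 2 - ‖x‖ ^ 2) := by
    intro k
    rw [hyz, hzy]
    ring
  rw [hh]
  rw [Finset.prod_congr rfl fun k _ => hfac k, Finset.prod_mul_distrib,
    Finset.prod_const, Nat.card_Icc, hzy]
  have hpow : ‖x - z‖ ^ (2 * (m:ℝ) - (n:ℝ)) =
      ‖x - z‖ ^ (2 * m) / ‖x - z‖ ^ n := by
    rw [Real.rpow_sub hR, ← Real.rpow_natCast (‖x - z‖) (2 * m),
      ← Real.rpow_natCast (‖x - z‖) n]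
    push_cast
    ring_nf
  rw [hpow]
  obtain ⟨p, rfl⟩ : ∃ p, m = p + 2 := ⟨m - 2, by omega⟩
  rw [show p + 2 - 1 + 1 - 1 = p + 1 from by omega,
    show p + 2 - 1 = p + 1 from by omega,
    show 4 * (p + 2) - 2 = 4 * p + 6 from by omega,
    show 2 * (p + 2) = 2 * p + 4 from by omega]
  have hRn : (‖x - z‖:ℝ) ^ n ≠ 0 := pow_ne_zero n hR.ne'
  rw [div_pow]
  field_simp
  ring
end

section
/- Let Ω ⊆ ℝⁿ be open and bounded, x₀ ∈ Ω with r := dist(x₀, ∂Ω) > 0, and suppose 2r ≤ diam(Ω). Set α_k = (r/(2 diam Ω))^{m−k} for k = 1,...,m−1. Then with c_k = w_{k,1}/det W the coefficients of the Vandermonde matrix with nodes α_k² (α_m = 1), one has c_k ≤ 2^{m−1} (r/diam Ω)^{k²−k} for every k = 1,...,m. -/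
open Finset Metric

set_option maxHeartbeats 1600000

private lemma aux_sum_range (m k : ℕ) (hk : k ≤ m) :
    ∑ i ∈ Finset.range k, 2 * (m - i) = k ^ 2 + k + 2 * (m - k) * k := by
  induction k with
  | zero => simp
  | succ k ih =>
    rw [Finset.sum_range_succ, ih (by omega)]
    obtain ⟨e, rfl⟩ : ∃ e, m = k + (e + 1) := ⟨m - k - 1, by omega⟩
    have h1 : k + (e + 1) - k = e + 1 := by omega
    have h2 : k + (e + 1) - (k + 1) = e := by omega
    rw [h1, h2]; ring

private lemma prod_Ioi_split {M : Type*} [CommMonoid M] (m : ℕ) (k : Fin (m + 1))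
    (g : Fin (m + 1) → Fin (m + 1) → M) :
    (∏ i : Fin (m + 1), ∏ j ∈ Finset.Ioi i, g i j) =
      (∏ i : Fin m, ∏ j ∈ Finset.Ioi i, g (k.succAbove i) (k.succAbove j)) *
        ((∏ i ∈ Finset.Iio k, g i k) * (∏ j ∈ Finset.Ioi k, g k j)) := by
  rw [Finset.prod_sigma' Finset.univ (fun i => Finset.Ioi i) g,
    Finset.prod_sigma' Finset.univ (fun i => Finset.Ioi i)
      (fun i j => g (k.succAbove i) (k.succAbove j))]
  rw [← Finset.prod_filter_mul_prod_filter_not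
    (Finset.univ.sigma fun i : Fin (m + 1) => Finset.Ioi i)
    (fun x => x.1 ≠ k ∧ x.2 ≠ k)]
  congr 1
  · symm
    refine Finset.prod_bij
      (fun (x : Σ _ : Fin m, Fin m) _ =>
        (⟨k.succAbove x.1, k.succAbove x.2⟩ : Σ _ : Fin (m + 1), Fin (m + 1))) ?_ ?_ ?_ ?_
    · rintro ⟨a, b⟩ ha
      simp only [Finset.mem_sigma, Finset.mem_univ, Finset.mem_Ioi, Finset.mem_filter,
        true_and] at ha ⊢
      exact ⟨Fin.succAbove_lt_succAbove_iff.2 ha, Fin.succAbove_ne k _, Fin.succAbove_ne k _⟩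
    · rintro ⟨a₁, b₁⟩ h₁ ⟨a₂, b₂⟩ h₂ h
      simp only [Sigma.mk.inj_iff, heq_eq_eq] at h
      obtain ⟨ha, hb⟩ := h
      have ha' := k.succAbove_right_injective ha
      have hb' := k.succAbove_right_injective hb
      simp [ha', hb']
    · rintro ⟨a, b⟩ hb
      simp only [Finset.mem_filter, Finset.mem_sigma, Finset.mem_univ, Finset.mem_Ioi,
        true_and] at hb
      obtain ⟨hab, hak, hbk⟩ := hb
      obtain ⟨i, hi⟩ := Fin.exists_succAbove_eq hak
      obtain ⟨j, hj⟩ := Fin.exists_succAbove_eq hbk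
      refine ⟨⟨i, j⟩, ?_, ?_⟩
      · simp only [Finset.mem_sigma, Finset.mem_univ, Finset.mem_Ioi, true_and]
        rw [← Fin.succAbove_lt_succAbove_iff (p := k), hi, hj]; exact hab
      · simp [hi, hj]
    · intro a ha; rfl
  · rw [← Finset.prod_filter_mul_prod_filter_not _ (fun x => x.2 = k)]
    congr 1
    · symm
      refine Finset.prod_bij
        (fun (i : Fin (m + 1)) _ => (⟨i, k⟩ : Σ _ : Fin (m + 1), Fin (m + 1))) ?_ ?_ ?_ ?_
      · intro a ha
        simp only [Finset.mem_Iio] at ha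
        simp only [Finset.mem_filter, Finset.mem_sigma, Finset.mem_univ, Finset.mem_Ioi,
          true_and]
        exact ⟨⟨ha, fun h => h.2 rfl⟩, trivial⟩
      · intro a₁ h₁ a₂ h₂ h
        simpa using h
      · rintro ⟨a, b⟩ hb
        simp only [Finset.mem_filter, Finset.mem_sigma, Finset.mem_univ, Finset.mem_Ioi,
          true_and] at hb
        obtain ⟨⟨hab, _⟩, hbk⟩ := hb
        refine ⟨a, ?_, ?_⟩
        · simp only [Finset.mem_Iio]; rw [← hbk]; exact hab
        · simp [hbk]
      · intro a ha; rfl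
    · symm
      refine Finset.prod_bij
        (fun (j : Fin (m + 1)) _ => (⟨k, j⟩ : Σ _ : Fin (m + 1), Fin (m + 1))) ?_ ?_ ?_ ?_
      · intro a ha
        simp only [Finset.mem_Ioi] at ha
        simp only [Finset.mem_filter, Finset.mem_sigma, Finset.mem_univ, Finset.mem_Ioi,
          true_and]
        exact ⟨⟨ha, fun h => h.1 rfl⟩, (ne_of_gt ha)⟩
      · intro a₁ h₁ a₂ h₂ h
        simpa using h
      · rintro ⟨a, b⟩ hb
        simp only [Finset.mem_filter, Finset.mem_sigma, Finset.mem_univ, Finset.mem_Ioi,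
          true_and] at hb
        obtain ⟨⟨hab, hor⟩, hbk⟩ := hb
        have hak : a = k := by
          by_contra hne
          exact hor ⟨hne, hbk⟩
        refine ⟨b, ?_, ?_⟩
        · simp only [Finset.mem_Ioi]; rw [← hak]; exact hab
        · simp [hak]
      · intro a ha; rfl

/-- Size of the matrix is `m + 1`, i.e. the paper's `m ≥ 2` corresponds to `m + 1` with
`1 ≤ m`. The nodes are `α_i² = x^{2(m - i₀)}` for `x = r / (2 diam Ω)` and the 0-based row
index `i₀`, and the paper's `k² - k` becomes `(k : ℕ)² + (k : ℕ)`, and `2^{m-1}` becomes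
`2^m`. -/
theorem coefficient_bound (n : ℕ) (Ω : Set (EuclideanSpace ℝ (Fin n)))
    (hΩopen : IsOpen Ω) (hΩbd : Bornology.IsBounded Ω)
    (x₀ : EuclideanSpace ℝ (Fin n)) (hx₀ : x₀ ∈ Ω)
    (r : ℝ) (hrdef : r = Metric.infDist x₀ (frontier Ω)) (hr : 0 < r)
    (h2r : 2 * r ≤ Metric.diam Ω)
    (m : ℕ) (hm : 1 ≤ m) (k : Fin (m + 1)) :
    Matrix.det
        ((Matrix.of fun (i j : Fin (m + 1)) =>
            (r / (2 * Metric.diam Ω)) ^ (2 * (j : ℕ) * (m - (i : ℕ)))).submatrix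
          k.succAbove Fin.succ) /
      Matrix.det
        (Matrix.of fun (i j : Fin (m + 1)) =>
          (r / (2 * Metric.diam Ω)) ^ (2 * (j : ℕ) * (m - (i : ℕ)))) ≤
      2 ^ m * (r / Metric.diam Ω) ^ ((k : ℕ) ^ 2 + (k : ℕ)) := by
  have hd : 0 < Metric.diam Ω := by linarith
  set d := Metric.diam Ω with hddef
  set x : ℝ := r / (2 * d) with hxdef
  have hx0 : 0 < x := div_pos hr (by linarith)
  have hxhalf : x ≤ 1 / 2 := by
    rw [hxdef, div_le_iff₀ (by linarith)]
    linarith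
  have hx1 : x < 1 := lt_of_le_of_lt hxhalf (by norm_num)
  have hrd : r / d = 2 * x := by
    rw [hxdef]
    field_simp
  clear_value x d
  clear hxdef hddef
  have hkm : (k : ℕ) ≤ m := Fin.is_le k
  set v : Fin (m + 1) → ℝ := fun i => x ^ (2 * (m - (i : ℕ))) with hvdef
  set u : Fin m → ℝ := fun i => v (k.succAbove i) with hudef
  have hvpos : ∀ i, 0 < v i := fun i => pow_pos hx0 _
  have hvmono : ∀ i j : Fin (m + 1), i < j → v i < v j := by
    intro i j hij
    have hij' : (i : ℕ) < (j : ℕ) := hij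
    have hjm : (j : ℕ) ≤ m := Fin.is_le j
    exact pow_lt_pow_right_of_lt_one₀ hx0 hx1 (by omega)
  -- identify the two matrices
  have hW : (Matrix.of fun (i j : Fin (m + 1)) => x ^ (2 * (j : ℕ) * (m - (i : ℕ))))
      = Matrix.vandermonde v := by
    ext i j
    simp only [Matrix.of_apply, Matrix.vandermonde_apply, hvdef]
    rw [← pow_mul]
    congr 1
    ring
  have hN : ((Matrix.of fun (i j : Fin (m + 1)) =>
        x ^ (2 * (j : ℕ) * (m - (i : ℕ)))).submatrix k.succAbove Fin.succ)
      = Matrix.of (fun i j => u i * Matrix.vandermonde u i j) := by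
    ext i j
    simp only [Matrix.submatrix_apply, Matrix.of_apply, Matrix.vandermonde_apply, hudef, hvdef,
      Fin.val_succ]
    rw [← pow_succ', ← pow_mul]
    congr 1
    ring
  rw [hN, hW]
  clear hN hW
  rw [show Matrix.of (fun i j => u i * Matrix.vandermonde u i j)
      = Matrix.of (fun i j => u i * (Matrix.vandermonde u) i j) from rfl]
  rw [Matrix.det_mul_column, Matrix.det_vandermonde, Matrix.det_vandermonde,
    prod_Ioi_split m k (fun i j => v j - v i)]
  set Vu : ℝ := ∏ i : Fin m, ∏ j ∈ Finset.Ioi i, (v (k.succAbove j) - v (k.succAbove i))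
    with hVudef
  set P1 : ℝ := ∏ i ∈ Finset.Iio k, (v k - v i) with hP1def
  set P2 : ℝ := ∏ j ∈ Finset.Ioi k, (v j - v k) with hP2def
  have hVu : 0 < Vu := by
    apply Finset.prod_pos
    intro i _
    apply Finset.prod_pos
    intro j hj
    have : i < j := Finset.mem_Ioi.1 hj
    exact sub_pos.2 (hvmono _ _ (Fin.succAbove_lt_succAbove_iff.2 this))
  have hP1 : 0 < P1 := by
    apply Finset.prod_pos
    intro i hi
    exact sub_pos.2 (hvmono _ _ (Finset.mem_Iio.1 hi))
  have hP2 : 0 < P2 := by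
    apply Finset.prod_pos
    intro j hj
    exact sub_pos.2 (hvmono _ _ (Finset.mem_Ioi.1 hj))
  rw [mul_comm Vu (P1 * P2)]
  rw [show (∏ i : Fin m, u i) * Vu / (P1 * P2 * Vu) = (∏ i : Fin m, u i) / (P1 * P2) from by
    rw [mul_div_mul_right _ _ hVu.ne']]
  rw [div_le_iff₀ (by positivity)]
  rw [hrd]
  -- compute ∏ u
  have hPu : (∏ i : Fin m, u i) = (∏ i ∈ Finset.Iio k, v i) * (∏ j ∈ Finset.Ioi k, v j) := by
    have h1 : (∏ i : Fin (m + 1), v i) = v k * ∏ i : Fin m, u i :=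
      Fin.prod_univ_succAbove v k
    have h3 : (Finset.univ : Finset (Fin (m + 1))) \ {k} = Finset.Iio k ∪ Finset.Ioi k := by
      ext i
      simp only [Finset.mem_sdiff, Finset.mem_univ, Finset.mem_singleton, true_and,
        Finset.mem_union, Finset.mem_Iio, Finset.mem_Ioi]
      exact ne_iff_lt_or_gt
    have hdisj : Disjoint (Finset.Iio k) (Finset.Ioi k) := by
      rw [Finset.disjoint_left]
      intro a ha hb
      exact absurd (Finset.mem_Ioi.1 hb) (not_lt.2 (le_of_lt (Finset.mem_Iio.1 ha)))
    have h2 : (∏ i : Fin (m + 1), v i)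
        = ((∏ i ∈ Finset.Iio k, v i) * (∏ j ∈ Finset.Ioi k, v j)) * v k := by
      rw [Finset.prod_eq_prod_diff_singleton_mul (Finset.mem_univ k) v, h3,
        Finset.prod_union hdisj]
    have hvk : v k ≠ 0 := (hvpos k).ne'
    apply mul_left_cancel₀ hvk
    rw [← h1, h2]
    ring
  -- value of the Iio product
  have hIio : (∏ i ∈ Finset.Iio k, v i)
      = x ^ ((k : ℕ) ^ 2 + (k : ℕ)) * (x ^ (2 * (m - (k : ℕ)))) ^ (k : ℕ) := by
    have hmap : ∑ i ∈ Finset.Iio k, 2 * (m - (i : ℕ))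
        = ∑ i ∈ Finset.range (k : ℕ), 2 * (m - i) := by
      have hIr : Finset.Iio (k : ℕ) = Finset.range (k : ℕ) := by
        ext a
        simp [Finset.mem_Iio, Finset.mem_range]
      rw [← hIr, ← Fin.map_valEmbedding_Iio, Finset.sum_map]
      rfl
    have hvv : (∏ i ∈ Finset.Iio k, v i) = ∏ i ∈ Finset.Iio k, x ^ (2 * (m - (i : ℕ))) := rfl
    rw [hvv, Finset.prod_pow_eq_pow_sum, hmap, aux_sum_range m (k : ℕ) hkm, pow_add, ← pow_mul]
  -- lower bounds for P1 and P2
  have hP1bd : (x ^ (2 * (m - (k : ℕ)))) ^ (k : ℕ) / 2 ^ (k : ℕ) ≤ P1 := by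
    have hstep : ∀ i ∈ Finset.Iio k, x ^ (2 * (m - (k : ℕ))) / 2 ≤ v k - v i := by
      intro i hi
      have hik : (i : ℕ) < (k : ℕ) := Fin.lt_iff_val_lt_val.mp (Finset.mem_Iio.1 hi)
      have hle : 2 * (m - (k : ℕ)) + 2 ≤ 2 * (m - (i : ℕ)) := by omega
      have h1 : v i ≤ x ^ (2 * (m - (k : ℕ)) + 2) :=
        pow_le_pow_of_le_one hx0.le hx1.le hle
      have h2 : x ^ (2 * (m - (k : ℕ)) + 2) = x ^ (2 * (m - (k : ℕ))) * x ^ 2 := pow_add x _ 2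
      have h3 : x ^ 2 ≤ 1 / 4 := by nlinarith
      have h4 : (0 : ℝ) ≤ x ^ (2 * (m - (k : ℕ))) := by positivity
      have h5 : v k = x ^ (2 * (m - (k : ℕ))) := rfl
      rw [h5]
      nlinarith
    calc (x ^ (2 * (m - (k : ℕ)))) ^ (k : ℕ) / 2 ^ (k : ℕ)
        = ∏ _i ∈ Finset.Iio k, (x ^ (2 * (m - (k : ℕ))) / 2) := by
          rw [Finset.prod_const, Fin.card_Iio, div_pow]
      _ ≤ P1 := Finset.prod_le_prod (fun i _ => by positivity) hstep
  have hP2bd : (∏ j ∈ Finset.Ioi k, v j) / 2 ^ (m - (k : ℕ)) ≤ P2 := by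
    have hstep : ∀ j ∈ Finset.Ioi k, v j / 2 ≤ v j - v k := by
      intro j hj
      have hkj : (k : ℕ) < (j : ℕ) := Fin.lt_iff_val_lt_val.mp (Finset.mem_Ioi.1 hj)
      have hjm : (j : ℕ) ≤ m := Fin.is_le j
      have hle : 2 * (m - (j : ℕ)) + 2 ≤ 2 * (m - (k : ℕ)) := by omega
      have h1 : v k ≤ x ^ (2 * (m - (j : ℕ)) + 2) :=
        pow_le_pow_of_le_one hx0.le hx1.le hle
      have h2 : x ^ (2 * (m - (j : ℕ)) + 2) = x ^ (2 * (m - (j : ℕ))) * x ^ 2 := pow_add x _ 2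
      have h3 : x ^ 2 ≤ 1 / 4 := by nlinarith
      have h4 : (0 : ℝ) ≤ x ^ (2 * (m - (j : ℕ))) := by positivity
      have h5 : v j = x ^ (2 * (m - (j : ℕ))) := rfl
      rw [h5]
      nlinarith
    calc (∏ j ∈ Finset.Ioi k, v j) / 2 ^ (m - (k : ℕ))
        = ∏ j ∈ Finset.Ioi k, (v j / 2) := by
          rw [Finset.prod_div_distrib, Finset.prod_const, Fin.card_Ioi]
          norm_num
      _ ≤ P2 := Finset.prod_le_prod (fun j _ => by positivity) hstep
  -- put everything together
  set K : ℕ := (k : ℕ) ^ 2 + (k : ℕ) with hKdef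
  set A : ℝ := (x ^ (2 * (m - (k : ℕ)))) ^ (k : ℕ) with hAdef
  set B : ℝ := ∏ j ∈ Finset.Ioi k, v j with hBdef
  have hA0 : 0 < A := by positivity
  have hB0 : 0 < B := Finset.prod_pos fun j _ => hvpos j
  have h2pow : (2 : ℝ) ^ (k : ℕ) * 2 ^ (m - (k : ℕ)) = 2 ^ m := by
    rw [← pow_add]
    congr 1
    omega
  calc (∏ i : Fin m, u i) = x ^ K * A * B := by rw [hPu, hIio]
    _ ≤ (2 * x) ^ K * A * B := by
        have h := pow_le_pow_left₀ hx0.le (show x ≤ 2 * x by linarith) K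
        exact mul_le_mul_of_nonneg_right (mul_le_mul_of_nonneg_right h hA0.le) hB0.le
    _ = 2 ^ m * (2 * x) ^ K * (A / 2 ^ (k : ℕ) * (B / 2 ^ (m - (k : ℕ)))) := by
        rw [div_mul_div_comm, ← h2pow]
        field_simp
    _ ≤ 2 ^ m * (2 * x) ^ K * (P1 * P2) := by
        apply mul_le_mul_of_nonneg_left
        · exact mul_le_mul hP1bd hP2bd (by positivity) hP1.le
        · positivity
end
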